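/- L²-type Lipschitz estimate for the Maxwellian: for U₁=(h₁,h₁u₁), U₂=(h₂,h₂u₂) with h₁,h₂ ≥ 0, ∫_ℝ M(U₁,ξ)·(M(U₁,ξ) − M(U₂,ξ))² dξ ≤ (3/(g²π²))·( g(h₂−h₁)² + min(h₁,h₂)(u₂−u₁)² ). -/

import Mathlib

open MeasureTheory Real

noncomputable def Mx (g h u ξ : ℝ) : ℝ := (1/(g*π)) * Real.sqrt (max 0 (2*g*h - (ξ-u)^2))
noncomputable def H0 (g f ξ : ℝ) : ℝ := ξ^2*f/2 + (g^2*π^2/6)*f^3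
noncomputable def dH0 (g f ξ : ℝ) : ℝ := ξ^2/2 + (g^2*π^2/2)*f^2

open intervalIntegral


lemma hasDerivAt_q {x : ℝ} (hx : x ∈ Set.Ioo (-1:ℝ) 1) :
    HasDerivAt (fun x : ℝ => Real.sqrt (1 - x^2)) (-x / Real.sqrt (1 - x^2)) x := by
  have h1 : (0:ℝ) < 1 - x^2 := by nlinarith [hx.1, hx.2]
  have h2 : HasDerivAt (fun x : ℝ => 1 - x^2) (-2*x) x := by
    simpa using ((hasDerivAt_pow 2 x).const_sub 1)
  have h3 := (Real.hasDerivAt_sqrt (ne_of_gt h1)).comp x h2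
  refine h3.congr_deriv ?_
  field_simp

lemma hasDerivAt_q3 {x : ℝ} (hx : x ∈ Set.Ioo (-1:ℝ) 1) :
    HasDerivAt (fun x : ℝ => (1 - x^2) * Real.sqrt (1 - x^2))
      (-3 * x * Real.sqrt (1 - x^2)) x := by
  have h1 : (0:ℝ) < 1 - x^2 := by nlinarith [hx.1, hx.2]
  have hq : (0:ℝ) < Real.sqrt (1 - x^2) := Real.sqrt_pos.mpr h1
  have h2 : HasDerivAt (fun x : ℝ => 1 - x^2) (-2*x) x := by
    simpa using ((hasDerivAt_pow 2 x).const_sub 1)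
  have h3 := h2.mul (hasDerivAt_q hx)
  refine h3.congr_deriv ?_
  have hsq : Real.sqrt (1-x^2) * Real.sqrt (1-x^2) = 1 - x^2 := Real.mul_self_sqrt h1.le
  field_simp
  linear_combination x * hsq

lemma contq : Continuous (fun x : ℝ => Real.sqrt (1 - x^2)) := by
  continuity

lemma U2 : ∫ x in (-1:ℝ)..1, x * Real.sqrt (1 - x^2) = 0 := by
  have key : ∀ x ∈ Set.Ioo (-1:ℝ) 1,
      HasDerivAt (fun x : ℝ => -(1 - x^2) * Real.sqrt (1 - x^2) / 3)
        (x * Real.sqrt (1 - x^2)) x := by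
    intro x hx
    have := (hasDerivAt_q3 hx).const_mul (-(1:ℝ)/3)
    refine (this.congr_deriv (by ring)).congr_of_eventuallyEq
      (Filter.Eventually.of_forall fun y => by ring)
  have := intervalIntegral.integral_eq_sub_of_hasDerivAt_of_le
    (f' := fun x : ℝ => x * Real.sqrt (1 - x^2))
    (show (-1:ℝ) ≤ 1 by norm_num)
    (by apply Continuous.continuousOn; continuity)
    key
    (by apply Continuous.intervalIntegrable; continuity)
  rw [this]; norm_num

lemma U3 : ∫ x in (-1:ℝ)..1, x^2 * Real.sqrt (1 - x^2) = π/8 := by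
  set F : ℝ → ℝ := fun x => -(x*((1 - x^2) * Real.sqrt (1 - x^2)))/4
      + x * Real.sqrt (1 - x^2)/8 + Real.arcsin x/8 with hF
  have key : ∀ x ∈ Set.Ioo (-1:ℝ) 1,
      HasDerivAt F (x^2 * Real.sqrt (1 - x^2)) x := by
    intro x hx
    have h1 : (0:ℝ) < 1 - x^2 := by nlinarith [hx.1, hx.2]
    have hq : (0:ℝ) < Real.sqrt (1 - x^2) := Real.sqrt_pos.mpr h1
    have d1 : HasDerivAt (fun x : ℝ => x*((1 - x^2) * Real.sqrt (1 - x^2)))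
        (1*((1 - x^2) * Real.sqrt (1 - x^2)) + x * (-3 * x * Real.sqrt (1 - x^2))) x :=
      (hasDerivAt_id x).mul (hasDerivAt_q3 hx)
    have d2 : HasDerivAt (fun x : ℝ => x * Real.sqrt (1 - x^2))
        (1 * Real.sqrt (1 - x^2) + x * (-x / Real.sqrt (1 - x^2))) x :=
      (hasDerivAt_id x).mul (hasDerivAt_q hx)
    have d3 : HasDerivAt Real.arcsin (1 / Real.sqrt (1 - x^2)) x :=
      Real.hasDerivAt_arcsin (by intro h; rw [h] at hx; exact absurd hx.1 (by norm_num))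
        (by intro h; rw [h] at hx; exact absurd hx.2 (by norm_num))
    have := ((d1.neg.div_const 4).add (d2.div_const 8)).add (d3.div_const 8)
    refine this.congr_deriv ?_
    have hsq : Real.sqrt (1 - x^2) * Real.sqrt (1 - x^2) = 1 - x^2 :=
      Real.mul_self_sqrt h1.le
    field_simp
    nlinarith [hsq, hq]
  have := intervalIntegral.integral_eq_sub_of_hasDerivAt_of_le
    (f' := fun x : ℝ => x^2 * Real.sqrt (1 - x^2))
    (show (-1:ℝ) ≤ 1 by norm_num)
    (by apply Continuous.continuousOn
        exact (((continuous_id.mul ((continuous_const.sub (continuous_pow 2)).mul contq)).neg.div_const 4).add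
          ((continuous_id.mul contq).div_const 8)).add (Real.continuous_arcsin.div_const 8))
    key
    (by apply Continuous.intervalIntegrable; exact (continuous_pow 2).mul contq)
  rw [this, hF]
  have : Real.sqrt (1 - (1:ℝ)^2) = 0 := by norm_num
  have h2 : Real.sqrt (1 - (-1:ℝ)^2) = 0 := by norm_num
  simp [this, h2, Real.arcsin_one, Real.arcsin_neg_one]
  ring

lemma U1 : ∫ x in (-1:ℝ)..1, Real.sqrt (1 - x^2) = π/2 := by
  simpa using integral_sqrt_one_sub_sq

-- generic reduction: integral over ℝ of function vanishing outside Ioc a b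
lemma integral_eq_intervalIntegral {f : ℝ → ℝ} {a b : ℝ} (hab : a ≤ b)
    (h : ∀ x, x ∉ Set.Ioc a b → f x = 0) : ∫ x, f x = ∫ x in a..b, f x := by
  rw [intervalIntegral.integral_of_le hab,
    MeasureTheory.setIntegral_eq_integral_of_forall_compl_eq_zero h]

lemma W_vanish {c s : ℝ} (h : c^2 - s^2 ≤ 0) : Real.sqrt (max 0 (c^2 - s^2)) = 0 := by
  rw [max_eq_left h, Real.sqrt_zero]

lemma W_outside {c s : ℝ} (hc : 0 < c) (h : s ∉ Set.Ioc (-c) c) :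
    Real.sqrt (max 0 (c^2 - s^2)) = 0 := by
  apply W_vanish
  simp only [Set.mem_Ioc, not_and_or, not_lt, not_le] at h
  rcases h with h | h <;> nlinarith

lemma W_scale {c y : ℝ} (hc : 0 < c) :
    Real.sqrt (c^2 - (c*y)^2) = c * Real.sqrt (1 - y^2) := by
  have : c^2 - (c*y)^2 = c^2 * (1 - y^2) := by ring
  rw [this, Real.sqrt_mul (sq_nonneg c), Real.sqrt_sq hc.le]

lemma W0 {c : ℝ} (hc : 0 ≤ c) :
    ∫ s : ℝ, Real.sqrt (max 0 (c^2 - s^2)) = π * c^2 / 2 := by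
  rcases eq_or_lt_of_le hc with rfl | hc
  · have hz : ∀ s : ℝ, Real.sqrt (max 0 ((0:ℝ)^2 - s^2)) = 0 :=
      fun s => W_vanish (by nlinarith)
    calc ∫ s : ℝ, Real.sqrt (max 0 ((0:ℝ)^2 - s^2)) = ∫ _ : ℝ, (0:ℝ) := by
          congr 1; funext s; exact hz s
      _ = π * (0:ℝ)^2 / 2 := by simp
  rw [integral_eq_intervalIntegral (by linarith) (fun x hx => W_outside hc hx)]
  have hcong : Set.EqOn (fun s : ℝ => Real.sqrt (max 0 (c^2 - s^2)))
      (fun s : ℝ => Real.sqrt (c^2 - s^2)) (Set.uIcc (-c) c) := by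
    intro x hx
    rw [Set.uIcc_of_le (by linarith)] at hx
    simp only
    rw [max_eq_right (by nlinarith [hx.1, hx.2])]
  rw [intervalIntegral.integral_congr hcong]
  have heq := intervalIntegral.integral_comp_mul_left (fun s => Real.sqrt (c^2 - s^2))
    (a := -1) (b := 1) (ne_of_gt hc)
  rw [mul_neg_one, mul_one, smul_eq_mul] at heq
  have h2 : ∫ x in (-c)..c, Real.sqrt (c^2 - x^2)
      = c * ∫ y in (-1:ℝ)..1, Real.sqrt (c^2 - (c*y)^2) := by
    rw [heq]; field_simp
  rw [h2]
  have h3 : ∫ y in (-1:ℝ)..1, Real.sqrt (c^2 - (c*y)^2)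
      = c * ∫ y in (-1:ℝ)..1, Real.sqrt (1 - y^2) := by
    rw [← intervalIntegral.integral_const_mul]
    apply intervalIntegral.integral_congr
    intro y _
    exact W_scale hc
  rw [h3, U1]; ring

lemma Wmom {c : ℝ} (hc : 0 < c) (p : ℝ → ℝ) :
    ∫ s : ℝ, p s * Real.sqrt (max 0 (c^2 - s^2))
      = c * ∫ y in (-1:ℝ)..1, p (c*y) * Real.sqrt (c^2 - (c*y)^2) := by
  rw [integral_eq_intervalIntegral (a := -c) (b := c) (by linarith)
      (fun x hx => by rw [W_outside hc hx, mul_zero])]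
  have hcong : Set.EqOn (fun s : ℝ => p s * Real.sqrt (max 0 (c^2 - s^2)))
      (fun s : ℝ => p s * Real.sqrt (c^2 - s^2)) (Set.uIcc (-c) c) := by
    intro x hx
    rw [Set.uIcc_of_le (by linarith)] at hx
    simp only
    rw [max_eq_right (by nlinarith [hx.1, hx.2])]
  rw [intervalIntegral.integral_congr hcong]
  have heq := intervalIntegral.integral_comp_mul_left
    (fun s => p s * Real.sqrt (c^2 - s^2)) (a := -1) (b := 1) (ne_of_gt hc)
  rw [mul_neg_one, mul_one, smul_eq_mul] at heq
  rw [eq_comm, heq]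
  field_simp

lemma W1 {c : ℝ} (hc : 0 ≤ c) :
    ∫ s : ℝ, s * Real.sqrt (max 0 (c^2 - s^2)) = 0 := by
  rcases eq_or_lt_of_le hc with rfl | hc
  · have hz : ∀ s : ℝ, s * Real.sqrt (max 0 ((0:ℝ)^2 - s^2)) = 0 :=
      fun s => by rw [W_vanish (by nlinarith), mul_zero]
    calc ∫ s : ℝ, s * Real.sqrt (max 0 ((0:ℝ)^2 - s^2)) = ∫ _ : ℝ, (0:ℝ) := by
          congr 1; funext s; exact hz s
      _ = 0 := by simp
  rw [Wmom hc (fun s => s)]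
  have h3 : ∫ y in (-1:ℝ)..1, (c*y) * Real.sqrt (c^2 - (c*y)^2)
      = c^2 * ∫ y in (-1:ℝ)..1, y * Real.sqrt (1 - y^2) := by
    rw [← intervalIntegral.integral_const_mul]
    apply intervalIntegral.integral_congr
    intro y _
    simp only
    rw [W_scale hc]; ring
  rw [h3, U2]; ring

lemma W2 {c : ℝ} (hc : 0 ≤ c) :
    ∫ s : ℝ, s^2 * Real.sqrt (max 0 (c^2 - s^2)) = π * c^4 / 8 := by
  rcases eq_or_lt_of_le hc with rfl | hc
  · have hz : ∀ s : ℝ, s^2 * Real.sqrt (max 0 ((0:ℝ)^2 - s^2)) = 0 :=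
      fun s => by rw [W_vanish (by nlinarith), mul_zero]
    calc ∫ s : ℝ, s^2 * Real.sqrt (max 0 ((0:ℝ)^2 - s^2)) = ∫ _ : ℝ, (0:ℝ) := by
          congr 1; funext s; exact hz s
      _ = π * (0:ℝ)^4 / 8 := by simp
  rw [Wmom hc (fun s => s^2)]
  have h3 : ∫ y in (-1:ℝ)..1, (c*y)^2 * Real.sqrt (c^2 - (c*y)^2)
      = c^3 * ∫ y in (-1:ℝ)..1, y^2 * Real.sqrt (1 - y^2) := by
    rw [← intervalIntegral.integral_const_mul]
    apply intervalIntegral.integral_congr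
    intro y _
    simp only
    rw [W_scale hc]; ring
  rw [h3, U3]; ring

lemma W3 {c : ℝ} (hc : 0 ≤ c) :
    ∫ s : ℝ, (Real.sqrt (max 0 (c^2 - s^2)))^3 = 3 * π * c^4 / 8 := by
  have hcube : ∀ s : ℝ, (Real.sqrt (max 0 (c^2 - s^2)))^3
      = (max 0 (c^2 - s^2)) * Real.sqrt (max 0 (c^2 - s^2)) := by
    intro s
    rw [pow_succ, Real.sq_sqrt (le_max_left _ _)]
  rcases eq_or_lt_of_le hc with rfl | hc
  · have hz : ∀ s : ℝ, (Real.sqrt (max 0 ((0:ℝ)^2 - s^2)))^3 = 0 :=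
      fun s => by rw [W_vanish (by nlinarith)]; ring
    calc ∫ s : ℝ, (Real.sqrt (max 0 ((0:ℝ)^2 - s^2)))^3 = ∫ _ : ℝ, (0:ℝ) := by
          congr 1; funext s; exact hz s
      _ = 3 * π * (0:ℝ)^4 / 8 := by simp
  calc ∫ s : ℝ, (Real.sqrt (max 0 (c^2 - s^2)))^3
      = ∫ s : ℝ, (max 0 (c^2 - s^2)) * Real.sqrt (max 0 (c^2 - s^2)) := by
        congr 1; funext s; exact hcube s
    _ = c * ∫ y in (-1:ℝ)..1, (max 0 (c^2 - (c*y)^2)) * Real.sqrt (c^2 - (c*y)^2) :=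
        Wmom hc _
    _ = 3 * π * c^4 / 8 := by
        have h3 : ∫ y in (-1:ℝ)..1, (max 0 (c^2 - (c*y)^2)) * Real.sqrt (c^2 - (c*y)^2)
            = c^3 * ∫ y in (-1:ℝ)..1, ((1-y^2) * Real.sqrt (1 - y^2)) := by
          rw [← intervalIntegral.integral_const_mul]
          apply intervalIntegral.integral_congr
          intro y hy
          rw [Set.uIcc_of_le (by norm_num)] at hy
          simp only
          have hyy : (0:ℝ) ≤ 1 - y^2 := by nlinarith [hy.1, hy.2]
          rw [W_scale hc, max_eq_right (by nlinarith [mul_nonneg (sq_nonneg c) hyy])]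
          ring
        have hU4 : ∫ y in (-1:ℝ)..1, ((1-y^2) * Real.sqrt (1 - y^2))
            = π/2 - π/8 := by
          have hsplit : ∀ y : ℝ, (1-y^2) * Real.sqrt (1 - y^2)
              = Real.sqrt (1 - y^2) - y^2 * Real.sqrt (1 - y^2) := by intro y; ring
          rw [intervalIntegral.integral_congr (g := fun y : ℝ =>
              Real.sqrt (1 - y^2) - y^2 * Real.sqrt (1 - y^2)) (fun y _ => hsplit y),
            intervalIntegral.integral_sub
              (by apply Continuous.intervalIntegrable; continuity)
              (by apply Continuous.intervalIntegrable; exact (continuous_pow 2).mul contq),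
            U1, U3]
        rw [h3, hU4]; ring
lemma Mx_cont (g h u : ℝ) : Continuous (Mx g h u) := by
  unfold Mx
  exact continuous_const.mul ((continuous_const.max (by continuity)).sqrt)

lemma Mx_nonneg {g : ℝ} (hg : 0 < g) (h u ξ : ℝ) : 0 ≤ Mx g h u ξ := by
  unfold Mx
  have : (0:ℝ) < g * π := by positivity
  positivity

lemma Mx_hcs (g h u : ℝ) : HasCompactSupport (Mx g h u) := by
  apply HasCompactSupport.intro (isCompact_Icc (a := u - (|2*g*h|+1)) (b := u + (|2*g*h|+1)))
  intro ξ hξ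
  simp only [Set.mem_Icc, not_and_or, not_le] at hξ
  have habs : |2*g*h| + 1 < |ξ - u| := by
    rw [lt_abs]
    rcases hξ with h1 | h1
    · right; linarith
    · left; linarith
  have h2 : 2*g*h - (ξ-u)^2 ≤ 0 := by
    nlinarith [abs_nonneg (2*g*h), abs_nonneg (ξ-u), sq_abs (ξ-u), le_abs_self (2*g*h)]
  unfold Mx
  rw [max_eq_left h2, Real.sqrt_zero, mul_zero]

lemma integrable_mul_Mx {g h u : ℝ} {P : ℝ → ℝ} (hP : Continuous P) :
    Integrable (fun ξ => P ξ * Mx g h u ξ) :=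
  (hP.mul (Mx_cont g h u)).integrable_of_hasCompactSupport
    ((Mx_hcs g h u).mul_left)

lemma integrable_Mx (g h u : ℝ) : Integrable (Mx g h u) :=
  (Mx_cont g h u).integrable_of_hasCompactSupport (Mx_hcs g h u)

lemma Mx_eqW {g h : ℝ} (hg : 0 < g) (hh : 0 ≤ h) (u ξ : ℝ) :
    Mx g h u ξ = (1/(g*π)) * Real.sqrt (max 0 ((Real.sqrt (2*g*h))^2 - (ξ-u)^2)) := by
  rw [Mx, Real.sq_sqrt (by positivity)]

lemma W_int {g h : ℝ} (hg : 0 < g) (hh : 0 ≤ h) {P : ℝ → ℝ} (hP : Continuous P) :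
    Integrable (fun s : ℝ => P s * Real.sqrt (max 0 ((Real.sqrt (2*g*h))^2 - s^2))) := by
  have h1 := (integrable_mul_Mx (g := g) (h := h) (u := 0) hP).const_mul (g*π)
  have h2 : (fun s : ℝ => P s * Real.sqrt (max 0 ((Real.sqrt (2*g*h))^2 - s^2)))
      = fun s => (g*π) * (P s * Mx g h 0 s) := by
    funext s
    rw [Mx_eqW hg hh 0 s, sub_zero]
    have hgπ : g * π ≠ 0 := by positivity
    field_simp
  rw [h2]; exact h1

lemma Mx_mom0 {g h : ℝ} (hg : 0 < g) (hh : 0 ≤ h) (u : ℝ) :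
    ∫ ξ : ℝ, Mx g h u ξ = h := by
  set c := Real.sqrt (2*g*h) with hcdef
  have hc : 0 ≤ c := Real.sqrt_nonneg _
  have hc2 : c^2 = 2*g*h := Real.sq_sqrt (by positivity)
  have hgπ : g * π ≠ 0 := by positivity
  calc ∫ ξ : ℝ, Mx g h u ξ
      = ∫ ξ : ℝ, (1/(g*π)) * Real.sqrt (max 0 (c^2 - (ξ-u)^2)) := by
        congr 1; funext ξ; exact Mx_eqW hg hh u ξ
    _ = (1/(g*π)) * ∫ ξ : ℝ, Real.sqrt (max 0 (c^2 - (ξ-u)^2)) := by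
        rw [MeasureTheory.integral_const_mul]
    _ = (1/(g*π)) * ∫ s : ℝ, Real.sqrt (max 0 (c^2 - s^2)) := by
        rw [integral_sub_right_eq_self (fun s => Real.sqrt (max 0 (c^2 - s^2))) u]
    _ = (1/(g*π)) * (π * c^2 / 2) := by rw [W0 hc]
    _ = h := by rw [hc2]; field_simp

lemma Mx_mom1 {g h : ℝ} (hg : 0 < g) (hh : 0 ≤ h) (u : ℝ) :
    ∫ ξ : ℝ, ξ * Mx g h u ξ = h * u := by
  set c := Real.sqrt (2*g*h) with hcdef
  have hc : 0 ≤ c := Real.sqrt_nonneg _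
  have hc2 : c^2 = 2*g*h := Real.sq_sqrt (by positivity)
  have hgπ : g * π ≠ 0 := by positivity
  have hW : Integrable (fun s : ℝ => Real.sqrt (max 0 (c^2 - s^2))) := by
    simpa using W_int hg hh continuous_const (P := fun _ => (1:ℝ))
  have hsW : Integrable (fun s : ℝ => s * Real.sqrt (max 0 (c^2 - s^2))) :=
    W_int hg hh continuous_id
  calc ∫ ξ : ℝ, ξ * Mx g h u ξ
      = ∫ ξ : ℝ, (fun s : ℝ => (1/(g*π)) * ((s+u) * Real.sqrt (max 0 (c^2 - s^2)))) (ξ - u) := by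
        congr 1; funext ξ
        simp only
        rw [Mx_eqW hg hh u ξ, sub_add_cancel]
        ring
    _ = ∫ s : ℝ, (1/(g*π)) * ((s+u) * Real.sqrt (max 0 (c^2 - s^2))) :=
        integral_sub_right_eq_self (μ := volume)
          (fun s : ℝ => (1/(g*π)) * ((s+u) * Real.sqrt (max 0 (c^2 - s^2)))) u
    _ = (1/(g*π)) * ∫ s : ℝ, (s+u) * Real.sqrt (max 0 (c^2 - s^2)) := by
        rw [MeasureTheory.integral_const_mul]
    _ = (1/(g*π)) * ∫ s : ℝ, (s * Real.sqrt (max 0 (c^2 - s^2))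
          + u * Real.sqrt (max 0 (c^2 - s^2))) := by
        congr 1; congr 1; funext s; ring
    _ = (1/(g*π)) * ((∫ s : ℝ, s * Real.sqrt (max 0 (c^2 - s^2)))
          + u * ∫ s : ℝ, Real.sqrt (max 0 (c^2 - s^2))) := by
        rw [MeasureTheory.integral_add hsW (hW.const_mul u), MeasureTheory.integral_const_mul]
    _ = (1/(g*π)) * (0 + u * (π * c^2 / 2)) := by rw [W1 hc, W0 hc]
    _ = h * u := by rw [hc2]; field_simp; ring

lemma Mx_mom2 {g h : ℝ} (hg : 0 < g) (hh : 0 ≤ h) (u : ℝ) :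
    ∫ ξ : ℝ, ξ^2 * Mx g h u ξ = g*h^2/2 + h*u^2 := by
  set c := Real.sqrt (2*g*h) with hcdef
  have hc : 0 ≤ c := Real.sqrt_nonneg _
  have hc2 : c^2 = 2*g*h := Real.sq_sqrt (by positivity)
  have hgπ : g * π ≠ 0 := by positivity
  have hW : Integrable (fun s : ℝ => Real.sqrt (max 0 (c^2 - s^2))) := by
    simpa using W_int hg hh continuous_const (P := fun _ => (1:ℝ))
  have hsW : Integrable (fun s : ℝ => s * Real.sqrt (max 0 (c^2 - s^2))) :=
    W_int hg hh continuous_id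
  have hs2W : Integrable (fun s : ℝ => s^2 * Real.sqrt (max 0 (c^2 - s^2))) :=
    W_int hg hh (continuous_pow 2)
  calc ∫ ξ : ℝ, ξ^2 * Mx g h u ξ
      = ∫ ξ : ℝ, (fun s : ℝ => (1/(g*π)) * ((s+u)^2 * Real.sqrt (max 0 (c^2 - s^2)))) (ξ - u) := by
        congr 1; funext ξ
        simp only
        rw [Mx_eqW hg hh u ξ, sub_add_cancel]
        ring
    _ = ∫ s : ℝ, (1/(g*π)) * ((s+u)^2 * Real.sqrt (max 0 (c^2 - s^2))) :=
        integral_sub_right_eq_self (μ := volume)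
          (fun s : ℝ => (1/(g*π)) * ((s+u)^2 * Real.sqrt (max 0 (c^2 - s^2)))) u
    _ = (1/(g*π)) * ∫ s : ℝ, (s+u)^2 * Real.sqrt (max 0 (c^2 - s^2)) := by
        rw [MeasureTheory.integral_const_mul]
    _ = (1/(g*π)) * ∫ s : ℝ, (s^2 * Real.sqrt (max 0 (c^2 - s^2))
          + ((2*u) * (s * Real.sqrt (max 0 (c^2 - s^2)))
            + u^2 * Real.sqrt (max 0 (c^2 - s^2)))) := by
        congr 1; congr 1; funext s; ring
    _ = (1/(g*π)) * ((∫ s : ℝ, s^2 * Real.sqrt (max 0 (c^2 - s^2)))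
          + ((2*u) * (∫ s : ℝ, s * Real.sqrt (max 0 (c^2 - s^2)))
            + u^2 * ∫ s : ℝ, Real.sqrt (max 0 (c^2 - s^2)))) := by
        have hrest : Integrable (fun s : ℝ => (2*u) * (s * Real.sqrt (max 0 (c^2 - s^2)))
            + u^2 * Real.sqrt (max 0 (c^2 - s^2))) :=
          (hsW.const_mul (2*u)).add (hW.const_mul (u^2))
        rw [MeasureTheory.integral_add hs2W hrest,
          MeasureTheory.integral_add (hsW.const_mul (2*u)) (hW.const_mul (u^2)),
          MeasureTheory.integral_const_mul, MeasureTheory.integral_const_mul]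
    _ = (1/(g*π)) * ((π * c^4/8) + ((2*u) * 0 + u^2 * (π * c^2 / 2))) := by
        rw [W2 hc, W1 hc, W0 hc]
    _ = g*h^2/2 + h*u^2 := by
        rw [show c^4 = (c^2)^2 by ring, hc2]; field_simp; ring

lemma Mx_mom3 {g h : ℝ} (hg : 0 < g) (hh : 0 ≤ h) (u : ℝ) :
    ∫ ξ : ℝ, (Mx g h u ξ)^3 = 3*h^2/(2*g*π^2) := by
  set c := Real.sqrt (2*g*h) with hcdef
  have hc : 0 ≤ c := Real.sqrt_nonneg _
  have hc2 : c^2 = 2*g*h := Real.sq_sqrt (by positivity)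
  have hgπ : g * π ≠ 0 := by positivity
  calc ∫ ξ : ℝ, (Mx g h u ξ)^3
      = ∫ ξ : ℝ, (fun s : ℝ => (1/(g*π))^3 * (Real.sqrt (max 0 (c^2 - s^2)))^3) (ξ - u) := by
        congr 1; funext ξ
        simp only
        rw [Mx_eqW hg hh u ξ]
        ring
    _ = ∫ s : ℝ, (1/(g*π))^3 * (Real.sqrt (max 0 (c^2 - s^2)))^3 :=
        integral_sub_right_eq_self (μ := volume)
          (fun s : ℝ => (1/(g*π))^3 * (Real.sqrt (max 0 (c^2 - s^2)))^3) u
    _ = (1/(g*π))^3 * ∫ s : ℝ, (Real.sqrt (max 0 (c^2 - s^2)))^3 := by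
        rw [MeasureTheory.integral_const_mul]
    _ = (1/(g*π))^3 * (3 * π * c^4 / 8) := by rw [W3 hc]
    _ = 3*h^2/(2*g*π^2) := by
        rw [show c^4 = (c^2)^2 by ring, hc2]
        have hπ : π ≠ 0 := Real.pi_ne_zero
        field_simp
        ring
lemma Mx_sq {g h u ξ : ℝ} (hg : 0 < g) :
    (g*π)^2 * (Mx g h u ξ)^2 = max 0 (2*g*h - (ξ-u)^2) := by
  have hgπ : g * π ≠ 0 := by positivity
  unfold Mx
  nth_rewrite 2 [mul_pow]
  rw [Real.sq_sqrt (le_max_left _ _)]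
  field_simp

lemma ptwise {g : ℝ} (hg : 0 < g) (hA uA hB uB ξ : ℝ) :
    (g^2*π^2/6) * ((Mx g hB uB ξ - Mx g hA uA ξ)^2 * (Mx g hB uB ξ + 2*Mx g hA uA ξ))
      ≤ (g^2*π^2/6) * ((Mx g hB uB ξ)^3 - (Mx g hA uA ξ)^3)
        - (g*hA - uA^2/2 + uA*ξ - ξ^2/2) * (Mx g hB uB ξ - Mx g hA uA ξ) := by
  set MA := Mx g hA uA ξ with hMA
  set MB := Mx g hB uB ξ with hMB
  have key : (g*hA - uA^2/2 + uA*ξ - ξ^2/2) * (MB - MA)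
      ≤ (g^2*π^2/2) * MA^2 * (MB - MA) := by
    have hsq : (g^2*π^2/2) * MA^2 = (max 0 (2*g*hA - (ξ-uA)^2)) / 2 := by
      have := Mx_sq (h := hA) (u := uA) (ξ := ξ) hg
      rw [← hMA] at this
      nlinarith [this]
    have hl : g*hA - uA^2/2 + uA*ξ - ξ^2/2 = (2*g*hA - (ξ-uA)^2) / 2 := by ring
    rcases le_or_gt 0 (2*g*hA - (ξ-uA)^2) with ht | ht
    · rw [hsq, hl, max_eq_right ht]
    · have hMA0 : MA = 0 := by
        rw [hMA]
        unfold Mx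
        rw [max_eq_left ht.le, Real.sqrt_zero, mul_zero]
      rw [hMA0, hl]
      have hMB : 0 ≤ MB := Mx_nonneg hg hB uB ξ
      have : (2*g*hA - (ξ-uA)^2) / 2 * (MB - 0) ≤ 0 :=
        mul_nonpos_of_nonpos_of_nonneg (by linarith) (by linarith)
      simpa using this
  have hid : (g^2*π^2/6) * ((MB - MA)^2 * (MB + 2*MA))
      = (g^2*π^2/6) * (MB^3 - MA^3) - (g^2*π^2/2) * MA^2 * (MB - MA) := by ring
  rw [hid]
  linarith [key]

lemma Mx_poly_mom {g h : ℝ} (hg : 0 < g) (hh : 0 ≤ h) (u a b d : ℝ) :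
    ∫ ξ : ℝ, (a + b*ξ + d*ξ^2) * Mx g h u ξ
      = a*h + b*(h*u) + d*(g*h^2/2 + h*u^2) := by
  have h0 : Integrable (fun ξ : ℝ => a * Mx g h u ξ) := (integrable_Mx g h u).const_mul a
  have h1 : Integrable (fun ξ : ℝ => b * (ξ * Mx g h u ξ)) :=
    (integrable_mul_Mx continuous_id).const_mul b
  have h2 : Integrable (fun ξ : ℝ => d * (ξ^2 * Mx g h u ξ)) :=
    (integrable_mul_Mx (continuous_pow 2)).const_mul d
  calc ∫ ξ : ℝ, (a + b*ξ + d*ξ^2) * Mx g h u ξ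
      = ∫ ξ : ℝ, (a * Mx g h u ξ + (b * (ξ * Mx g h u ξ) + d * (ξ^2 * Mx g h u ξ))) := by
        congr 1; funext ξ; ring
    _ = (∫ ξ : ℝ, a * Mx g h u ξ)
        + ((∫ ξ : ℝ, b * (ξ * Mx g h u ξ)) + ∫ ξ : ℝ, d * (ξ^2 * Mx g h u ξ)) := by
        have hrest : Integrable (fun ξ : ℝ => b * (ξ * Mx g h u ξ) + d * (ξ^2 * Mx g h u ξ)) :=
          h1.add h2
        rw [MeasureTheory.integral_add h0 hrest, MeasureTheory.integral_add h1 h2]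
    _ = a*h + b*(h*u) + d*(g*h^2/2 + h*u^2) := by
        rw [MeasureTheory.integral_const_mul, MeasureTheory.integral_const_mul,
          MeasureTheory.integral_const_mul, Mx_mom0 hg hh u, Mx_mom1 hg hh u, Mx_mom2 hg hh u]
        ring

lemma key_ineq {g hA hB : ℝ} (hg : 0 < g) (hhA : 0 ≤ hA) (hhB : 0 ≤ hB) (uA uB : ℝ) :
    ∫ ξ : ℝ, (Mx g hB uB ξ - Mx g hA uA ξ)^2 * (Mx g hB uB ξ + 2*Mx g hA uA ξ)
      ≤ (3/(g^2*π^2)) * (g*(hB-hA)^2 + hB*(uB-uA)^2) := by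
  have hπ : π ≠ 0 := Real.pi_ne_zero
  have hgπ2 : (0:ℝ) < g^2*π^2/6 := by positivity
  set cA := Mx_cont g hA uA
  set cB := Mx_cont g hB uB
  -- integrability of LHS integrand
  have hI1 : Integrable (fun ξ => (Mx g hB uB ξ - Mx g hA uA ξ)^2 * Mx g hB uB ξ) :=
    integrable_mul_Mx ((cB.sub cA).pow 2)
  have hI2 : Integrable (fun ξ => (Mx g hB uB ξ - Mx g hA uA ξ)^2 * Mx g hA uA ξ) :=
    integrable_mul_Mx ((cB.sub cA).pow 2)
  have hL : Integrable (fun ξ =>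
      (Mx g hB uB ξ - Mx g hA uA ξ)^2 * (Mx g hB uB ξ + 2*Mx g hA uA ξ)) := by
    have := hI1.add (hI2.const_mul 2)
    have heq : (fun ξ => (Mx g hB uB ξ - Mx g hA uA ξ)^2 * (Mx g hB uB ξ + 2*Mx g hA uA ξ))
        = fun ξ => (Mx g hB uB ξ - Mx g hA uA ξ)^2 * Mx g hB uB ξ
          + 2 * ((Mx g hB uB ξ - Mx g hA uA ξ)^2 * Mx g hA uA ξ) := by
      funext ξ; ring
    rw [heq]; exact this
  -- integrability of RHS integrand pieces
  have hMB3 : Integrable (fun ξ => (Mx g hB uB ξ)^3) := by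
    have := integrable_mul_Mx (g := g) (h := hB) (u := uB) (cB.pow 2)
    have heq : (fun ξ => (Mx g hB uB ξ)^3)
        = fun ξ => (Mx g hB uB ξ)^2 * Mx g hB uB ξ := by funext ξ; ring
    rw [heq]; exact this
  have hMA3 : Integrable (fun ξ => (Mx g hA uA ξ)^3) := by
    have := integrable_mul_Mx (g := g) (h := hA) (u := uA) (cA.pow 2)
    have heq : (fun ξ => (Mx g hA uA ξ)^3)
        = fun ξ => (Mx g hA uA ξ)^2 * Mx g hA uA ξ := by funext ξ; ring
    rw [heq]; exact this
  have hlcont : Continuous (fun ξ : ℝ => g*hA - uA^2/2 + uA*ξ - ξ^2/2) := by continuity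
  have hlB : Integrable (fun ξ => (g*hA - uA^2/2 + uA*ξ - ξ^2/2) * Mx g hB uB ξ) :=
    integrable_mul_Mx hlcont
  have hlA : Integrable (fun ξ => (g*hA - uA^2/2 + uA*ξ - ξ^2/2) * Mx g hA uA ξ) :=
    integrable_mul_Mx hlcont
  have hR : Integrable (fun ξ => (g^2*π^2/6) * ((Mx g hB uB ξ)^3 - (Mx g hA uA ξ)^3)
      - (g*hA - uA^2/2 + uA*ξ - ξ^2/2) * (Mx g hB uB ξ - Mx g hA uA ξ)) := by
    have h1 := ((hMB3.sub hMA3).const_mul (g^2*π^2/6)).sub (hlB.sub hlA)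
    have heq : (fun ξ => (g^2*π^2/6) * ((Mx g hB uB ξ)^3 - (Mx g hA uA ξ)^3)
        - (g*hA - uA^2/2 + uA*ξ - ξ^2/2) * (Mx g hB uB ξ - Mx g hA uA ξ))
        = fun ξ => (g^2*π^2/6) * ((Mx g hB uB ξ)^3 - (Mx g hA uA ξ)^3)
          - ((g*hA - uA^2/2 + uA*ξ - ξ^2/2) * Mx g hB uB ξ
            - (g*hA - uA^2/2 + uA*ξ - ξ^2/2) * Mx g hA uA ξ) := by
      funext ξ; ring
    rw [heq]; exact h1
  -- integrate the pointwise inequality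
  have hmono : (g^2*π^2/6) * ∫ ξ : ℝ,
      (Mx g hB uB ξ - Mx g hA uA ξ)^2 * (Mx g hB uB ξ + 2*Mx g hA uA ξ)
      ≤ ∫ ξ : ℝ, ((g^2*π^2/6) * ((Mx g hB uB ξ)^3 - (Mx g hA uA ξ)^3)
        - (g*hA - uA^2/2 + uA*ξ - ξ^2/2) * (Mx g hB uB ξ - Mx g hA uA ξ)) := by
    rw [← MeasureTheory.integral_const_mul]
    exact integral_mono (hL.const_mul _) hR (fun ξ => ptwise hg hA uA hB uB ξ)
  -- compute the RHS integral
  have hval : ∫ ξ : ℝ, ((g^2*π^2/6) * ((Mx g hB uB ξ)^3 - (Mx g hA uA ξ)^3)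
      - (g*hA - uA^2/2 + uA*ξ - ξ^2/2) * (Mx g hB uB ξ - Mx g hA uA ξ))
      = g*(hB-hA)^2/2 + hB*(uB-uA)^2/2 := by
    have hsplit : (fun ξ : ℝ => (g^2*π^2/6) * ((Mx g hB uB ξ)^3 - (Mx g hA uA ξ)^3)
        - (g*hA - uA^2/2 + uA*ξ - ξ^2/2) * (Mx g hB uB ξ - Mx g hA uA ξ))
        = fun ξ => (g^2*π^2/6) * ((Mx g hB uB ξ)^3 - (Mx g hA uA ξ)^3)
          - ((g*hA - uA^2/2 + uA*ξ - ξ^2/2) * Mx g hB uB ξ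
            - (g*hA - uA^2/2 + uA*ξ - ξ^2/2) * Mx g hA uA ξ) := by
      funext ξ; ring
    have hcube : Integrable (fun ξ => (g^2*π^2/6) * ((Mx g hB uB ξ)^3 - (Mx g hA uA ξ)^3)) :=
      (hMB3.sub hMA3).const_mul _
    have hll : Integrable (fun ξ => (g*hA - uA^2/2 + uA*ξ - ξ^2/2) * Mx g hB uB ξ
        - (g*hA - uA^2/2 + uA*ξ - ξ^2/2) * Mx g hA uA ξ) := hlB.sub hlA
    rw [hsplit, MeasureTheory.integral_sub hcube hll,
      MeasureTheory.integral_sub hlB hlA,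
      MeasureTheory.integral_const_mul, MeasureTheory.integral_sub hMB3 hMA3,
      Mx_mom3 hg hhB uB, Mx_mom3 hg hhA uA]
    have hposA : ∫ ξ : ℝ, (g*hA - uA^2/2 + uA*ξ - ξ^2/2) * Mx g hA uA ξ
        = (g*hA - uA^2/2)*hA + uA*(hA*uA) + (-(1:ℝ)/2)*(g*hA^2/2 + hA*uA^2) := by
      have := Mx_poly_mom hg hhA uA (g*hA - uA^2/2) uA (-(1:ℝ)/2)
      rw [← this]
      congr 1; funext ξ; ring
    have hposB : ∫ ξ : ℝ, (g*hA - uA^2/2 + uA*ξ - ξ^2/2) * Mx g hB uB ξ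
        = (g*hA - uA^2/2)*hB + uA*(hB*uB) + (-(1:ℝ)/2)*(g*hB^2/2 + hB*uB^2) := by
      have := Mx_poly_mom hg hhB uB (g*hA - uA^2/2) uA (-(1:ℝ)/2)
      rw [← this]
      congr 1; funext ξ; ring
    rw [hposA, hposB]
    field_simp
    ring
  rw [hval] at hmono
  have hfin : (3/(g^2*π^2)) * (g*(hB-hA)^2 + hB*(uB-uA)^2)
      = (g*(hB-hA)^2/2 + hB*(uB-uA)^2/2) / (g^2*π^2/6) := by
    field_simp
    ring
  rw [hfin, le_div_iff₀ hgπ2]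
  linarith [hmono]
lemma integrable_LHS (g hA uA hB uB : ℝ) :
    Integrable (fun ξ => (Mx g hB uB ξ - Mx g hA uA ξ)^2
      * (Mx g hB uB ξ + 2*Mx g hA uA ξ)) := by
  have hI1 : Integrable (fun ξ => (Mx g hB uB ξ - Mx g hA uA ξ)^2 * Mx g hB uB ξ) :=
    integrable_mul_Mx (((Mx_cont g hB uB).sub (Mx_cont g hA uA)).pow 2)
  have hI2 : Integrable (fun ξ => (Mx g hB uB ξ - Mx g hA uA ξ)^2 * Mx g hA uA ξ) :=
    integrable_mul_Mx (((Mx_cont g hB uB).sub (Mx_cont g hA uA)).pow 2)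
  have := hI1.add (hI2.const_mul 2)
  have heq : (fun ξ => (Mx g hB uB ξ - Mx g hA uA ξ)^2 * (Mx g hB uB ξ + 2*Mx g hA uA ξ))
      = fun ξ => (Mx g hB uB ξ - Mx g hA uA ξ)^2 * Mx g hB uB ξ
        + 2 * ((Mx g hB uB ξ - Mx g hA uA ξ)^2 * Mx g hA uA ξ) := by
    funext ξ; ring
  rw [heq]; exact this

theorem maxwellian_L2_lipschitz (g h₁ h₂ u₁ u₂ : ℝ) (hg : 0 < g) (hh1 : 0 ≤ h₁) (hh2 : 0 ≤ h₂) :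
    (∫ ξ : ℝ, Mx g h₁ u₁ ξ * (Mx g h₁ u₁ ξ - Mx g h₂ u₂ ξ)^2)
    ≤ (3/(g^2*π^2)) * (g*(h₂-h₁)^2 + min h₁ h₂ * (u₂-u₁)^2) := by
  have hI : Integrable (fun ξ => Mx g h₁ u₁ ξ * (Mx g h₁ u₁ ξ - Mx g h₂ u₂ ξ)^2) := by
    have := integrable_mul_Mx (g := g) (h := h₁) (u := u₁)
      (((Mx_cont g h₁ u₁).sub (Mx_cont g h₂ u₂)).pow 2)
    have heq : (fun ξ => Mx g h₁ u₁ ξ * (Mx g h₁ u₁ ξ - Mx g h₂ u₂ ξ)^2)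
        = fun ξ => (Mx g h₁ u₁ ξ - Mx g h₂ u₂ ξ)^2 * Mx g h₁ u₁ ξ := by funext ξ; ring
    rw [heq]; exact this
  rcases le_total h₁ h₂ with hmin | hmin
  · calc (∫ ξ : ℝ, Mx g h₁ u₁ ξ * (Mx g h₁ u₁ ξ - Mx g h₂ u₂ ξ)^2)
        ≤ ∫ ξ : ℝ, (Mx g h₁ u₁ ξ - Mx g h₂ u₂ ξ)^2
            * (Mx g h₁ u₁ ξ + 2*Mx g h₂ u₂ ξ) := by
          apply integral_mono hI (integrable_LHS g h₂ u₂ h₁ u₁)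
          intro ξ
          dsimp only
          nlinarith [Mx_nonneg hg h₂ u₂ ξ, Mx_nonneg hg h₁ u₁ ξ,
            sq_nonneg (Mx g h₁ u₁ ξ - Mx g h₂ u₂ ξ)]
      _ ≤ (3/(g^2*π^2)) * (g*(h₁-h₂)^2 + h₁*(u₁-u₂)^2) := key_ineq hg hh2 hh1 u₂ u₁
      _ = (3/(g^2*π^2)) * (g*(h₂-h₁)^2 + min h₁ h₂ * (u₂-u₁)^2) := by
          rw [min_eq_left hmin]; ring
  · calc (∫ ξ : ℝ, Mx g h₁ u₁ ξ * (Mx g h₁ u₁ ξ - Mx g h₂ u₂ ξ)^2)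
        ≤ ∫ ξ : ℝ, (Mx g h₂ u₂ ξ - Mx g h₁ u₁ ξ)^2
            * (Mx g h₂ u₂ ξ + 2*Mx g h₁ u₁ ξ) := by
          apply integral_mono hI (integrable_LHS g h₁ u₁ h₂ u₂)
          intro ξ
          dsimp only
          nlinarith [Mx_nonneg hg h₂ u₂ ξ, Mx_nonneg hg h₁ u₁ ξ,
            sq_nonneg (Mx g h₂ u₂ ξ - Mx g h₁ u₁ ξ)]
      _ ≤ (3/(g^2*π^2)) * (g*(h₂-h₁)^2 + h₂*(u₂-u₁)^2) := key_ineq hg hh1 hh2 u₁ u₂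
      _ = (3/(g^2*π^2)) * (g*(h₂-h₁)^2 + min h₁ h₂ * (u₂-u₁)^2) := by
          rw [min_eq_right hmin]
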